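/- Let k > 1 be an even integer and let n be a positive integer with prime factorization n = p₁^{r₁} ⋯ p_s^{r_s}. Then for each i: if r_i = 1, p_i² − 1 ∣ k and p_i ≡ 3 (mod 4), then Re(G_k(n)) ≡ −n²/p_i² (mod p_i); otherwise Re(G_k(n)) ≡ 0 (mod p_i^{r_i}). -/

import Mathlib

set_option maxHeartbeats 1000000


/-- The Gaussian power sum `G_k(n) = ∑_{1 ≤ a, b ≤ n} (a + b·i)^k` in `ℤ[i]`. -/
def Gsum (k n : ℕ) : GaussianInt :=
  ∑ a ∈ Finset.Icc 1 n, ∑ b ∈ Finset.Icc 1 n, (⟨(a : ℤ), (b : ℤ)⟩ : GaussianInt) ^ k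

open Finset

namespace GPS
local notation "ℤi" => GaussianInt

def I : ℤi := ⟨0,1⟩

lemma mk_eq (a b : ℤ) : (⟨a,b⟩ : ℤi) = (a : ℤi) + (b : ℤi) * I := by ext <;> simp [I]

def Tsum (k m : ℕ) : ℤi :=
  ∑ a ∈ Finset.range m, ∑ b ∈ Finset.range m, ((a : ℤi) + (b : ℤi) * I) ^ k

lemma Gsum_eq (k n : ℕ) : Gsum k n =
    ∑ a ∈ range n, ∑ b ∈ range n, (((a:ℕ)+1 : ℤi) + ((b:ℕ)+1 : ℤi) * I) ^ k := by
  unfold Gsum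
  rw [show Finset.Icc 1 n = Finset.Ico 1 (n+1) by ext x; simp only [Finset.mem_Icc, Finset.mem_Ico]; omega]
  rw [Finset.sum_Ico_eq_sum_range]
  simp only [Nat.add_sub_cancel]
  refine Finset.sum_congr rfl fun a _ => ?_
  rw [Finset.sum_Ico_eq_sum_range]
  simp only [Nat.add_sub_cancel]
  refine Finset.sum_congr rfl fun b _ => ?_
  rw [mk_eq]; push_cast; ring_nf

section periodic
variable {R : Type*} [CommRing R] {c : R} {g : ℕ → R} {m : ℕ}

lemma per_iter (hper : ∀ a, c ∣ g (a + m) - g a) (t a : ℕ) : c ∣ g (a + t * m) - g a := by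
  induction t with
  | zero => simp
  | succ t ih =>
      have h1 := hper (a + t * m)
      have h2 : a + (t+1) * m = (a + t*m) + m := by ring
      rw [h2]
      have := dvd_add h1 ih
      rwa [sub_add_sub_cancel] at this

lemma block (hper : ∀ a, c ∣ g (a + m) - g a) (t : ℕ) :
    c ∣ (∑ a ∈ range (t * m), g a) - t • (∑ a ∈ range m, g a) := by
  induction t with
  | zero => simp
  | succ t ih =>
      rw [add_mul, one_mul, Finset.sum_range_add, succ_nsmul]
      have h2 : c ∣ (∑ x ∈ range m, g (t*m + x)) - (∑ x ∈ range m, g x) := by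
        rw [← Finset.sum_sub_distrib]
        exact Finset.dvd_sum fun x _ => by
          have := per_iter hper t x; rwa [add_comm x (t*m)] at this
      have h3 := dvd_add ih h2
      convert h3 using 1
      abel

lemma block' (hper : ∀ a, c ∣ g (a + m) - g a) (t : ℕ) :
    c ∣ (∑ a ∈ range (t * m), g (a + 1)) - t • (∑ a ∈ range m, g a) := by
  have e : ∑ a ∈ range (t*m), g (a+1) = ((∑ a ∈ range (t*m), g a) + g (t*m)) - g 0 := by
    rw [← Finset.sum_range_succ, Finset.sum_range_succ']
    ring
  rw [e]
  have h1 := block hper t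
  have h2 : c ∣ g (t*m) - g 0 := by simpa using per_iter hper t 0
  have := dvd_add h1 h2
  convert this using 1
  abel

end periodic

lemma lemA_core {m t n : ℕ} (hn : n = t * m)
    (f : ℕ → ℕ → ℤi)
    (hper1 : ∀ a b, (m : ℤi) ∣ f (a + m) b - f a b)
    (hper2 : ∀ a b, (m : ℤi) ∣ f a (b + m) - f a b) :
    (m : ℤi) ∣ (∑ a ∈ range n, ∑ b ∈ range n, f (a+1) (b+1))
      - ((t^2 : ℕ) : ℤi) * (∑ a ∈ range m, ∑ b ∈ range m, f a b) := by
  subst hn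
  set S : ℤi := ∑ a ∈ range m, ∑ b ∈ range m, f a b with hS
  set h : ℕ → ℤi := fun a => ∑ b ∈ range (t*m), f a (b+1) with hh
  have hhper : ∀ a, (m : ℤi) ∣ h (a + m) - h a := by
    intro a
    rw [hh]
    simp only [← Finset.sum_sub_distrib]
    exact Finset.dvd_sum fun b _ => hper1 a (b+1)
  have step1 : (m:ℤi) ∣ (∑ a ∈ range (t*m), h (a+1)) - t • (∑ a ∈ range m, h a) :=
    block' hhper t
  have step2 : ∀ a, (m:ℤi) ∣ h a - t • (∑ b ∈ range m, f a b) := fun a =>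
    block' (fun b => hper2 a b) t
  have step3 : (m:ℤi) ∣ t • (∑ a ∈ range m, h a) - t • (∑ a ∈ range m, t • ∑ b ∈ range m, f a b) := by
    rw [← smul_sub, ← Finset.sum_sub_distrib, nsmul_eq_mul]
    exact Dvd.dvd.mul_left (Finset.dvd_sum fun a _ => step2 a) _
  have e : ∑ a ∈ range m, t • ∑ b ∈ range m, f a b = t • S := by
    rw [Finset.smul_sum]
  have final := dvd_add step1 step3
  rw [sub_add_sub_cancel, e] at final
  have e2 : (t • (t • S) : ℤi) = ((t^2:ℕ) : ℤi) * S := by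
    rw [smul_smul, nsmul_eq_mul]; push_cast; ring
  rwa [e2] at final

lemma lemA {m n : ℕ} (k : ℕ) (hmn : m ∣ n) :
    (m : ℤi) ∣ Gsum k n - (((n/m)^2 : ℕ) : ℤi) * Tsum k m := by
  have hn : n = (n/m) * m := (Nat.div_mul_cancel hmn).symm
  have h := lemA_core hn (fun a b => ((a : ℤi) + (b : ℤi) * I) ^ k) ?_ ?_
  · rw [Gsum_eq]
    exact h
  · intro a b
    have : (((a+m:ℕ) : ℤi) + (b : ℤi) * I) - ((a : ℤi) + (b : ℤi) * I) = (m:ℤi) := by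
      push_cast; ring
    calc (m:ℤi) = _ := this.symm
      _ ∣ _ := sub_dvd_pow_sub_pow _ _ k
  · intro a b
    have key : (((a:ℕ) : ℤi) + ((b+m:ℕ) : ℤi) * I) - ((a : ℤi) + (b : ℤi) * I) = (m:ℤi) * I := by
      push_cast; ring
    have h2 : (m:ℤi) ∣ (((a:ℕ) : ℤi) + ((b+m:ℕ) : ℤi) * I) - ((a : ℤi) + (b : ℤi) * I) := by
      rw [key]; exact Dvd.intro _ rfl
    exact h2.trans (sub_dvd_pow_sub_pow _ _ k)

lemma pow_expand {R : Type*} [CommRing R] (x y : R) (k : ℕ) :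
    x^2 ∣ (y + x)^(k+1) - y^(k+1) - ((k:R)+1) * x * y^k := by
  induction k with
  | zero => refine ⟨0, ?_⟩; push_cast; ring
  | succ t ih =>
      obtain ⟨c, hc⟩ := ih
      refine ⟨((t:R)+1) * y^t + c * (y + x), ?_⟩
      push_cast
      linear_combination (y + x) * hc

lemma range_mul_sum {β : Type*} [AddCommMonoid β] (g : ℕ → β) (M t : ℕ) :
    ∑ a ∈ range (t*M), g a = ∑ u ∈ range t, ∑ j ∈ range M, g (u*M + j) := by
  induction t with
  | zero => simp
  | succ t ih => rw [add_mul, one_mul, Finset.sum_range_add, ih, Finset.sum_range_succ]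

lemma lemB_step (p k s : ℕ) (hk : 1 ≤ k)
    (hIH : ((p:ℤi))^s ∣ Tsum k (p^(s+1))) :
    ((p:ℤi))^(s+2) ∣ Tsum k (p^(s+2)) := by
  set M : ℕ := p^(s+1) with hM
  have hpr : p^(s+2) = p * M := by rw [hM]; ring
  have key : ∀ u v a b : ℕ, ∃ c : ℤi,
      (((a:ℤi)+(b:ℤi)*I) + (M:ℤi)*((u:ℤi)+(v:ℤi)*I))^k
      = ((a:ℤi)+(b:ℤi)*I)^k
        + (k:ℤi) * ((M:ℤi)*((u:ℤi)+(v:ℤi)*I)) * ((a:ℤi)+(b:ℤi)*I)^(k-1)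
        + ((M:ℤi)*((u:ℤi)+(v:ℤi)*I))^2 * c := by
    intro u v a b
    obtain ⟨k', rfl⟩ : ∃ k', k = k' + 1 := ⟨k-1, by omega⟩
    obtain ⟨c, hc⟩ := pow_expand ((M:ℤi)*((u:ℤi)+(v:ℤi)*I)) ((a:ℤi)+(b:ℤi)*I) k'
    refine ⟨c, ?_⟩
    have : (k' + 1 - 1) = k' := by omega
    rw [this]
    push_cast
    linear_combination hc
  choose cc hcc using key
  have e0 : Tsum k (p^(s+2)) =
      ∑ u ∈ range p, ∑ a ∈ range M, ∑ v ∈ range p, ∑ b ∈ range M,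
        (((a:ℤi)+(b:ℤi)*I) + (M:ℤi)*((u:ℤi)+(v:ℤi)*I))^k := by
    unfold Tsum
    rw [hpr, range_mul_sum _ M p]
    refine Finset.sum_congr rfl fun u _ => ?_
    refine Finset.sum_congr rfl fun a _ => ?_
    rw [range_mul_sum _ M p]
    refine Finset.sum_congr rfl fun v _ => ?_
    refine Finset.sum_congr rfl fun b _ => ?_
    push_cast
    ring_nf
  have e1 : Tsum k (p^(s+2)) =
      ∑ u ∈ range p, ∑ v ∈ range p, ∑ a ∈ range M, ∑ b ∈ range M,
        (((a:ℤi)+(b:ℤi)*I) + (M:ℤi)*((u:ℤi)+(v:ℤi)*I))^k := by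
    rw [e0]
    exact Finset.sum_congr rfl fun u _ => Finset.sum_comm
  rw [e1]
  simp only [hcc, Finset.sum_add_distrib]
  refine dvd_add (dvd_add ?_ ?_) ?_
  · -- T1
    have h1 : (∑ u ∈ range p, ∑ v ∈ range p, ∑ a ∈ range M, ∑ b ∈ range M,
        ((a:ℤi)+(b:ℤi)*I)^k) = (p:ℤi)^2 * Tsum k M := by
      rw [show (∑ a ∈ range M, ∑ b ∈ range M, ((a:ℤi)+(b:ℤi)*I)^k) = Tsum k M from rfl]
      simp only [Finset.sum_const, Finset.card_range, nsmul_eq_mul]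
      ring
    rw [h1, show s+2 = 2+s by ring, pow_add]
    exact mul_dvd_mul dvd_rfl hIH
  · -- T2
    set C : ℤi := ∑ a ∈ range M, ∑ b ∈ range M, ((a:ℤi)+(b:ℤi)*I)^(k-1) with hC
    set σ : ℤi := ∑ i ∈ range p, (i:ℤi) with hσ
    have inner2 : ∀ u v : ℕ,
        (∑ a ∈ range M, ∑ b ∈ range M,
          ((k:ℤi) * ((M:ℤi)*((u:ℤi)+(v:ℤi)*I)) * ((a:ℤi)+(b:ℤi)*I)^(k-1)))
        = ((u:ℤi)+(v:ℤi)*I) * ((k:ℤi)*(M:ℤi)*C) := by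
      intro u v
      rw [hC]
      simp only [Finset.mul_sum]
      exact Finset.sum_congr rfl fun a _ => Finset.sum_congr rfl fun b _ => by ring
    have hsum2 : (∑ u ∈ range p, ∑ v ∈ range p, ∑ a ∈ range M, ∑ b ∈ range M,
          ((k:ℤi) * ((M:ℤi)*((u:ℤi)+(v:ℤi)*I)) * ((a:ℤi)+(b:ℤi)*I)^(k-1)))
        = ((p:ℤi)*(σ + σ*I)) * ((k:ℤi)*(M:ℤi)*C) := by
      simp only [inner2, ← Finset.sum_mul]
      congr 1
      rw [hσ]
      simp only [Finset.sum_add_distrib, Finset.sum_const, ← Finset.sum_mul, ← Finset.mul_sum,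
        Finset.card_range, nsmul_eq_mul]
      ring
    rw [hsum2]
    refine ⟨(σ + σ*I) * ((k:ℤi)*C), ?_⟩
    rw [hM]
    push_cast
    ring
  · -- T3
    refine Finset.dvd_sum fun u _ => Finset.dvd_sum fun v _ =>
      Finset.dvd_sum fun a _ => Finset.dvd_sum fun b _ => ?_
    have h3 : ((M:ℤi)*((u:ℤi)+(v:ℤi)*I))^2 * cc u v a b
        = (p:ℤi)^(2*(s+1)) * (((u:ℤi)+(v:ℤi)*I)^2 * cc u v a b) := by
      rw [hM]; push_cast; ring
    rw [h3]
    exact dvd_mul_of_dvd_left (pow_dvd_pow _ (by omega)) _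

lemma I_sq : (I:ℤi)^2 = -1 := by ext <;> simp [I, pow_two, Zsqrtd.re_mul, Zsqrtd.im_mul]

lemma lemC2 (j : ℕ) (hj : 1 ≤ j) : (2 : ℤi) ∣ Tsum (j+j) 2 := by
  have htwo : ∀ m : ℕ, 1 ≤ m → (2:ℤi) ∣ (2*I)^m := by
    intro m hm
    obtain ⟨m', rfl⟩ : ∃ m', m = m' + 1 := ⟨m-1, by omega⟩
    rw [pow_succ]
    exact Dvd.dvd.mul_left ⟨I, rfl⟩ _
  have h0 : (0 : ℤi)^(j+j) = 0 := zero_pow (by omega)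
  have hI : (I:ℤi)^(j+j) = (-1)^j := by rw [← two_mul, pow_mul, I_sq]
  have h11 : ((1:ℤi) + I)^(j+j) = (2*I)^j := by
    rw [← two_mul, pow_mul]
    have : ((1:ℤi) + I)^2 = 2*I := by
      rw [add_sq, I_sq, one_pow]
      ring
    rw [this]
  unfold Tsum
  simp only [Finset.sum_range_succ, Finset.sum_range_zero]
  push_cast
  simp only [zero_add, zero_mul, add_zero, one_mul, mul_one]
  rw [h0, hI, h11, one_pow]
  rcases Nat.even_or_odd j with he | ho
  · have he1 : ((-1:ℤi))^j = 1 := he.neg_one_pow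
    rw [he1, show (0:ℤi) + 1 + (1 + (2*I)^j) = 2 + (2*I)^j by ring]
    exact dvd_add ⟨1, by ring⟩ (htwo j hj)
  · have ho1 : ((-1:ℤi))^j = -1 := ho.neg_one_pow
    rw [ho1, show (0:ℤi) + -1 + (1 + (2*I)^j) = (2*I)^j by ring]
    exact htwo j hj

lemma sum_range_cast {p : ℕ} [NeZero p] {M : Type*} [AddCommMonoid M] (g : ZMod p → M) :
    ∑ a ∈ range p, g (a : ZMod p) = ∑ x : ZMod p, g x := by
  refine Finset.sum_nbij' (fun a => (a : ZMod p)) (fun x => x.val) ?_ ?_ ?_ ?_ ?_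
  · intro a _; exact Finset.mem_univ _
  · intro x _; exact Finset.mem_range.mpr (ZMod.val_lt x)
  · intro a ha; exact ZMod.val_cast_of_lt (Finset.mem_range.mp ha)
  · intro x _; exact ZMod.natCast_rightInverse x
  · intro a _; rfl

lemma sum_shift_pow {p : ℕ} [NeZero p] (d : ZMod p) (k : ℕ) :
    ∑ x : ZMod p, (x + d)^k = ∑ x : ZMod p, x^k :=
  Fintype.sum_equiv (Equiv.addRight d) _ _ (fun x => rfl)

lemma lift_Tsum_eq_zero {p k : ℕ} [NeZero p] (r : { r : ZMod p // r * r = ((-1 : ℤ) : ZMod p) }) :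
    Zsqrtd.lift r (Tsum k p) = 0 := by
  have hI : Zsqrtd.lift r (I : ℤi) = (r : ZMod p) := by
    simp [I, Zsqrtd.lift_apply_apply]
  unfold Tsum
  rw [map_sum]
  simp only [map_sum, map_pow, map_add, map_mul, map_natCast, hI]
  rw [Finset.sum_comm]
  have inner : ∀ b : ℕ, ∑ a ∈ range p, ((a:ZMod p) + (b:ZMod p)*(r:ZMod p))^k
      = ∑ x : ZMod p, x^k := by
    intro b
    rw [sum_range_cast (fun x => (x + (b:ZMod p)*(r:ZMod p))^k)]
    exact sum_shift_pow _ k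
  rw [Finset.sum_congr rfl (fun b _ => inner b)]
  rw [Finset.sum_const, Finset.card_range, nsmul_eq_mul, ZMod.natCast_self, zero_mul]

lemma lemC1 (p k : ℕ) (hp : p.Prime) (hp2 : p ≠ 2) (hp4 : p % 4 ≠ 3) :
    ((p:ℕ) : GaussianInt) ∣ Tsum k p := by
  haveI : Fact p.Prime := ⟨hp⟩
  obtain ⟨c, hc⟩ := ZMod.exists_sq_eq_neg_one_iff.mpr hp4
  have hc' : (c * c : ZMod p) = ((-1 : ℤ) : ZMod p) := by push_cast; exact hc.symm
  have hc'' : ((-c) * (-c) : ZMod p) = ((-1 : ℤ) : ZMod p) := by rw [neg_mul_neg]; exact hc'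
  have h1 := lift_Tsum_eq_zero (p:=p) (k:=k) ⟨c, hc'⟩
  have h2 := lift_Tsum_eq_zero (p:=p) (k:=k) ⟨-c, hc''⟩
  rw [Zsqrtd.lift_apply_apply] at h1 h2
  set x := (Tsum k p).re with hx0
  set y := (Tsum k p).im with hy0
  have h2ne : (2 : ZMod p) ≠ 0 := by
    intro h
    have : ((2:ℕ) : ZMod p) = 0 := by push_cast; exact h
    have h4 := (ZMod.natCast_eq_zero_iff 2 p).mp this
    have := Nat.le_of_dvd (by norm_num) h4
    have := hp.two_le
    omega
  have hcne : (c : ZMod p) ≠ 0 := by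
    intro h
    rw [h, mul_zero] at hc
    simp at hc
  have hx : ((x : ℤ) : ZMod p) = 0 := by
    have h3 : (2 : ZMod p) * ((x:ℤ) : ZMod p) = 0 := by
      push_cast at h1 h2 ⊢
      linear_combination h1 + h2
    rcases mul_eq_zero.mp h3 with h | h
    · exact absurd h h2ne
    · exact h
  have hy : ((y : ℤ) : ZMod p) = 0 := by
    have h3 : (2 : ZMod p) * c * ((y:ℤ) : ZMod p) = 0 := by
      push_cast at h1 h2 ⊢
      linear_combination h1 - h2
    rcases mul_eq_zero.mp h3 with h | h
    · rcases mul_eq_zero.mp h with h' | h'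
      · exact absurd h' h2ne
      · exact absurd h' hcne
    · exact h
  have : ((p:ℤ) : GaussianInt) ∣ Tsum k p := by
    rw [Zsqrtd.intCast_dvd]
    exact ⟨(ZMod.intCast_zmod_eq_zero_iff_dvd _ _).mp hx,
      (ZMod.intCast_zmod_eq_zero_iff_dvd _ _).mp hy⟩
  exact_mod_cast this

lemma reim (a b : ℤ) : ((a:ℤi) + (b:ℤi)*I).re = a ∧ ((a:ℤi) + (b:ℤi)*I).im = b := by
  constructor <;> simp [I, Zsqrtd.re_mul, Zsqrtd.im_mul]

lemma lemC3 (p k : ℕ) (hp : p.Prime) (hp3 : p % 4 = 3) (hk : k ≠ 0) :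
    ((p:ℕ) : GaussianInt) ∣ Tsum k p + (if (p^2 - 1) ∣ k then 1 else 0) := by
  haveI : Fact p.Prime := ⟨hp⟩
  have hprime : Prime ((p:ℕ) : ℤi) :=
    (GaussianInt.prime_iff_mod_four_eq_three_of_nat_prime p).mpr hp3
  set Ip : Ideal ℤi := Ideal.span {((p:ℕ) : ℤi)} with hIp
  haveI hmax : Ip.IsMaximal := PrincipalIdealRing.isMaximal_of_irreducible hprime.irreducible
  letI : Field (ℤi ⧸ Ip) := Ideal.Quotient.field Ip
  have hmem : ∀ z : ℤi, Ideal.Quotient.mk Ip z = 0 ↔ (p:ℤ) ∣ z.re ∧ (p:ℤ) ∣ z.im := by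
    intro z
    rw [Ideal.Quotient.eq_zero_iff_mem, hIp, Ideal.mem_span_singleton]
    constructor
    · intro h
      have h2 : ((p:ℤ) : ℤi) ∣ z := by exact_mod_cast h
      exact (Zsqrtd.intCast_dvd _ _).mp h2
    · intro h
      have h2 : ((p:ℤ) : ℤi) ∣ z := (Zsqrtd.intCast_dvd _ _).mpr h
      exact_mod_cast h2
  have hmem' : ∀ a b : ℤ, Ideal.Quotient.mk Ip ((a:ℤi) + (b:ℤi)*I) = 0 ↔
      ((a : ZMod p) = 0 ∧ (b : ZMod p) = 0) := by
    intro a b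
    rw [hmem, (reim a b).1, (reim a b).2,
      ← ZMod.intCast_zmod_eq_zero_iff_dvd, ← ZMod.intCast_zmod_eq_zero_iff_dvd]
  set e : ZMod p × ZMod p → ℤi ⧸ Ip :=
    fun w => Ideal.Quotient.mk Ip ((w.1.val : ℤi) + (w.2.val : ℤi) * I) with he
  have hbij : Function.Bijective e := by
    constructor
    · rintro ⟨x1, y1⟩ ⟨x2, y2⟩ h
      rw [he] at h
      simp only at h
      have hdiff : Ideal.Quotient.mk Ip
          ((((x1.val:ℤ) - x2.val :ℤ):ℤi) + (((y1.val:ℤ) - y2.val :ℤ):ℤi)*I) = 0 := by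
        rw [show ((((x1.val:ℤ) - x2.val :ℤ):ℤi) + (((y1.val:ℤ) - y2.val :ℤ):ℤi)*I)
          = ((x1.val : ℤi) + (y1.val : ℤi) * I) - ((x2.val : ℤi) + (y2.val : ℤi) * I) by
            push_cast; ring]
        rw [map_sub, h, sub_self]
      rw [hmem'] at hdiff
      obtain ⟨hre, him⟩ := hdiff
      have hx : x1 = x2 := by
        push_cast at hre
        have h6 := sub_eq_zero.mp hre
        rwa [ZMod.natCast_val, ZMod.natCast_val, ZMod.cast_id, ZMod.cast_id] at h6
      have hy : y1 = y2 := by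
        push_cast at him
        have h6 := sub_eq_zero.mp him
        rwa [ZMod.natCast_val, ZMod.natCast_val, ZMod.cast_id, ZMod.cast_id] at h6
      rw [hx, hy]
    · intro z
      obtain ⟨w, rfl⟩ := Ideal.Quotient.mk_surjective z
      refine ⟨((w.re : ZMod p), (w.im : ZMod p)), ?_⟩
      rw [he]
      simp only
      have hdiff : Ideal.Quotient.mk Ip
          (((((w.re : ZMod p).val:ℤ) - w.re :ℤ):ℤi) + ((((w.im : ZMod p).val:ℤ) - w.im :ℤ):ℤi)*I) = 0 := by
        rw [hmem']
        constructor
        · push_cast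
          simp [ZMod.natCast_val, ZMod.cast_id]
        · push_cast
          simp [ZMod.natCast_val, ZMod.cast_id]
      have hAw : ((((w.re : ZMod p).val:ℕ):ℤi) + (((w.im : ZMod p).val:ℕ):ℤi)*I) - w
          = (((((w.re : ZMod p).val:ℤ) - w.re) :ℤ):ℤi) + (((((w.im : ZMod p).val:ℤ) - w.im) :ℤ):ℤi)*I := by
        ext <;> simp [I, Zsqrtd.re_mul, Zsqrtd.im_mul] <;> ring
      have h9 : Ideal.Quotient.mk Ip ((((w.re : ZMod p).val:ℕ):ℤi) + (((w.im : ZMod p).val:ℕ):ℤi)*I)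
          - Ideal.Quotient.mk Ip w = 0 := by
        rw [← map_sub, hAw]
        exact hdiff
      exact sub_eq_zero.mp h9
  letI : Fintype (ℤi ⧸ Ip) := Fintype.ofBijective e hbij
  haveI : DecidableEq (ℤi ⧸ Ip) := Classical.decEq _
  have hcard : Fintype.card (ℤi ⧸ Ip) = p^2 := by
    rw [← Fintype.card_of_bijective hbij, Fintype.card_prod, ZMod.card]
    ring
  have hsum1 : Ideal.Quotient.mk Ip (Tsum k p) = ∑ z : ℤi ⧸ Ip, z^k := by
    have h1 : ∑ z : ℤi ⧸ Ip, z^k = ∑ w : ZMod p × ZMod p, (e w)^k :=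
      (Fintype.sum_bijective e hbij _ _ (fun w => rfl)).symm
    rw [h1, Fintype.sum_prod_type]
    unfold Tsum
    rw [map_sum, ← sum_range_cast (fun x : ZMod p => ∑ y : ZMod p, (e (x, y))^k)]
    refine Finset.sum_congr rfl fun a ha => ?_
    rw [map_sum, ← sum_range_cast (fun y : ZMod p => (e ((a:ZMod p), y))^k)]
    refine Finset.sum_congr rfl fun b hb => ?_
    rw [he]
    simp only
    rw [ZMod.val_cast_of_lt (mem_range.mp ha), ZMod.val_cast_of_lt (mem_range.mp hb), map_pow]
  have hsum2 : ∑ z : ℤi ⧸ Ip, z^k = if (p^2 - 1) ∣ k then -1 else 0 := by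
    classical
    have h0 : ∑ z : ℤi ⧸ Ip, z^k = ∑ u : (ℤi ⧸ Ip)ˣ, ((u:ℤi ⧸ Ip))^k := by
      let φ : (ℤi ⧸ Ip)ˣ ↪ (ℤi ⧸ Ip) := ⟨fun x => x, Units.val_injective⟩
      have hmap : univ.map φ = univ \ {0} := by
        ext x
        simpa only [Finset.mem_map, Finset.mem_univ, Function.Embedding.coeFn_mk, true_and,
          Finset.mem_sdiff, Finset.mem_singleton, φ] using
          (⟨fun ⟨u, hu⟩ => hu ▸ u.ne_zero, fun h => ⟨Units.mk0 x h, rfl⟩⟩ : (∃ a : (ℤi ⧸ Ip)ˣ, (a : ℤi ⧸ Ip) = x) ↔ x ≠ 0)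
      calc ∑ z : ℤi ⧸ Ip, z^k = ∑ z ∈ univ \ {(0: ℤi ⧸ Ip)}, z^k := by
            rw [← Finset.sum_sdiff (Finset.subset_univ {(0: ℤi ⧸ Ip)}), Finset.sum_singleton,
              zero_pow hk, add_zero]
        _ = ∑ u : (ℤi ⧸ Ip)ˣ, ((u:ℤi ⧸ Ip))^k := by
            rw [← hmap, Finset.sum_map]
            simp [φ]
    rw [h0]
    have := FiniteField.sum_pow_units (ℤi ⧸ Ip) k
    rw [hcard] at this
    rw [← this]
  by_cases hdvd : (p^2 - 1) ∣ k
  · rw [if_pos hdvd]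
    have hfin : Ideal.Quotient.mk Ip (Tsum k p + 1) = 0 := by
      rw [map_add, hsum1, hsum2, if_pos hdvd, map_one]
      ring
    have hm := Ideal.Quotient.eq_zero_iff_mem.mp hfin
    rw [hIp, Ideal.mem_span_singleton] at hm
    exact hm
  · rw [if_neg hdvd]
    have hfin : Ideal.Quotient.mk Ip (Tsum k p + 0) = 0 := by
      rw [map_add, hsum1, hsum2, if_neg hdvd, map_zero, add_zero]
    have hm := Ideal.Quotient.eq_zero_iff_mem.mp hfin
    rw [hIp, Ideal.mem_span_singleton] at hm
    exact hm

lemma lemB (p k : ℕ) (hk : 1 ≤ k) (r : ℕ) (hr : 2 ≤ r) :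
    (((p:ℕ)):GaussianInt)^r ∣ Tsum k (p^r) := by
  obtain ⟨s, rfl⟩ : ∃ s, r = s + 2 := ⟨r - 2, by omega⟩
  clear hr
  induction s with
  | zero => exact lemB_step p k 0 hk (by simpa using one_dvd _)
  | succ s ih => exact lemB_step p k (s+1) hk ((pow_dvd_pow _ (by omega)).trans ih)

end GPS


theorem re_Gsum_even_k_prime_power (k n : ℕ) (hk : 1 < k) (hke : Even k) (hn : 0 < n)
    (p : ℕ) (hp : p.Prime) (hpn : p ∣ n) :
    (n.factorization p = 1 ∧ (p ^ 2 - 1) ∣ k ∧ p % 4 = 3 →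
      (p : ℤ) ∣ (Gsum k n).re + (((n / p) ^ 2 : ℕ) : ℤ)) ∧
    (¬(n.factorization p = 1 ∧ (p ^ 2 - 1) ∣ k ∧ p % 4 = 3) →
      ((p ^ n.factorization p : ℕ) : ℤ) ∣ (Gsum k n).re) := by
  classical
  set r := n.factorization p with hr
  have hr1 : 1 ≤ r := hp.factorization_pos_of_dvd hn.ne' hpn
  have hdvd_n : p^r ∣ n := Nat.ordProj_dvd n p
  have hA := GPS.lemA (m := p^r) (n := n) k hdvd_n
  constructor
  · rintro ⟨hr_eq, hkdvd, hp3⟩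
    have hC := GPS.lemC3 p k hp hp3 (by omega)
    rw [if_pos hkdvd] at hC
    rw [hr_eq, pow_one] at hA
    have h2 : ((p:ℕ) : GaussianInt) ∣ Gsum k n + (((n/p)^2 :ℕ) : GaussianInt) := by
      have h3 : ((p:ℕ) : GaussianInt) ∣ (((n/p)^2 :ℕ) : GaussianInt) * (GPS.Tsum k p + 1) :=
        Dvd.dvd.mul_left hC _
      have h4 := dvd_add hA h3
      convert h4 using 1
      ring
    have h4 : (((p:ℤ)) : GaussianInt) ∣ Gsum k n + (((n/p)^2 :ℕ) : GaussianInt) := by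
      exact_mod_cast h2
    have h5 := ((Zsqrtd.intCast_dvd _ _).mp h4).1
    rwa [Zsqrtd.re_add, Zsqrtd.re_natCast] at h5
  · intro hnot
    have hTs : ((p:ℕ) : GaussianInt)^r ∣ GPS.Tsum k (p^r) := by
      rcases eq_or_lt_of_le hr1 with h1 | h2
      · have hre : r = 1 := h1.symm
        rw [hre, pow_one, pow_one]
        by_cases hp2 : p = 2
        · subst hp2
          obtain ⟨j, hkj⟩ := hke
          have hj : 1 ≤ j := by omega
          rw [hkj]
          exact_mod_cast GPS.lemC2 j hj
        · by_cases hp3 : p % 4 = 3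
          · have hnd : ¬((p^2 - 1) ∣ k) := fun h => hnot ⟨hre, h, hp3⟩
            have hC := GPS.lemC3 p k hp hp3 (by omega)
            rwa [if_neg hnd, add_zero] at hC
          · exact GPS.lemC1 p k hp hp2 hp3
      · exact GPS.lemB p k (by omega) r h2
    have hGs : ((p:ℕ) : GaussianInt)^r ∣ Gsum k n := by
      have h3 : ((p:ℕ) : GaussianInt)^r ∣ (((n/(p^r))^2 :ℕ) : GaussianInt) * GPS.Tsum k (p^r) :=
        Dvd.dvd.mul_left hTs _
      have h4 : ((p:ℕ) : GaussianInt)^r ∣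
          Gsum k n - (((n/(p^r))^2 :ℕ) : GaussianInt) * GPS.Tsum k (p^r) := by
        have : (((p^r :ℕ)) : GaussianInt) = ((p:ℕ) : GaussianInt)^r := by push_cast; ring
        rw [← this]
        exact hA
      have h5 := dvd_add h4 h3
      rwa [sub_add_cancel] at h5
    have h6 : (((p^r : ℤ)) : GaussianInt) ∣ Gsum k n := by
      have : (((p^r : ℤ)) : GaussianInt) = ((p:ℕ) : GaussianInt)^r := by push_cast; ring
      rw [this]
      exact hGs
    have h7 := ((Zsqrtd.intCast_dvd _ _).mp h6).1
    exact_mod_cast h7
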